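/- For every u₁ ∈ {0,1} and every pair x ≠ x' in {0,1}×{0,1}, the Bhattacharyya parameter of the glued split channel satisfies Z_{x,x'}(W^{(2,3)}_{u₁}) := Σ_{y∈Y⁴} √(W^{(2,3)}_{u₁}(x)(y)·W^{(2,3)}_{u₁}(x')(y)) ≥ (1/2)·Z(W)^{D_{x,x'}(u₁)}. -/
import Mathlib


open Finset

private lemma sqrt_prod' {ι : Type*} (s : Finset ι) (f : ι → ℝ) (hf : ∀ i ∈ s, 0 ≤ f i) :
    Real.sqrt (∏ i ∈ s, f i) = ∏ i ∈ s, Real.sqrt (f i) := by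
  induction s using Finset.cons_induction with
  | empty => simp
  | cons i s hi ih =>
    rw [Finset.prod_cons, Finset.prod_cons,
      Real.sqrt_mul (hf i (Finset.mem_cons_self _ _)),
      ih fun j hj => hf j (Finset.mem_cons_of_mem hj)]

/-- **Lower bound on the Bhattacharyya parameter of the glued split channel**
(from the proof of Proposition 3).  For a binary-input DMC `W` with Bhattacharyya parameter
`Z(W) = ∑ y, √(W 0 y · W 1 y)`, an arbitrary kernel map `g`, and the glued split channel
`W^{(2,3)}_{u₁}(x)(y) = (1/2) ∑_{u₄} W⁴(g(u₁,x,u₄))(y)`, for every `u₁` and every `x ≠ x'`: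
`Z_{x,x'}(W^{(2,3)}_{u₁}) ≥ (1/2) · Z(W)^{D_{x,x'}(u₁)}`, where
`D_{x,x'}(u₁) = min_{u₄,v₄} d_H(g(u₁,x,u₄), g(u₁,x',v₄))`. -/
theorem glued_split_channel_bhattacharyya_lower
    {Y : Type*} [Fintype Y] [Nonempty Y]
    (W : Bool → Y → ℝ) (hWnn : ∀ b y, 0 ≤ W b y)
    (hWsum : ∀ b, ∑ y, W b y = 1)
    (g : Bool → Bool × Bool → Bool → (Fin 4 → Bool)) :
    ∀ (u₁ : Bool) (x x' : Bool × Bool), x ≠ x' →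
      ((1 : ℝ) / 2) * (∑ y, Real.sqrt (W false y * W true y)) ^
            (Finset.univ.inf' Finset.univ_nonempty
              (fun p : Bool × Bool => hammingDist (g u₁ x p.1) (g u₁ x' p.2)))
        ≤ ∑ y : Fin 4 → Y,
            Real.sqrt ((((1 : ℝ) / 2) * ∑ u₄ : Bool, ∏ i, W (g u₁ x u₄ i) (y i)) *
              (((1 : ℝ) / 2) * ∑ v₄ : Bool, ∏ i, W (g u₁ x' v₄ i) (y i))) := by
  intro u₁ x x' _
  obtain ⟨p, -, hp⟩ := Finset.exists_mem_eq_inf' Finset.univ_nonempty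
    (fun p : Bool × Bool => hammingDist (g u₁ x p.1) (g u₁ x' p.2))
  rw [hp]
  set a : Fin 4 → Bool := g u₁ x p.1 with ha
  set b : Fin 4 → Bool := g u₁ x' p.2 with hb
  set Z : ℝ := ∑ y, Real.sqrt (W false y * W true y) with hZ
  -- key identity: the product-channel Bhattacharyya sum equals Z ^ hammingDist a b
  have key : ∑ y : Fin 4 → Y, Real.sqrt ((∏ i, W (a i) (y i)) * ∏ i, W (b i) (y i))
      = Z ^ hammingDist a b := by
    have h1 : ∀ y : Fin 4 → Y,
        Real.sqrt ((∏ i, W (a i) (y i)) * ∏ i, W (b i) (y i))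
          = ∏ i, Real.sqrt (W (a i) (y i) * W (b i) (y i)) := by
      intro y
      rw [← Finset.prod_mul_distrib,
        sqrt_prod' _ _ (fun i _ => mul_nonneg (hWnn _ _) (hWnn _ _))]
    simp only [h1]
    rw [show (Finset.univ : Finset (Fin 4 → Y)) = Fintype.piFinset (fun _ => Finset.univ) from
      (Fintype.piFinset_univ).symm,
      ← Finset.prod_univ_sum (t := fun _ : Fin 4 => (Finset.univ : Finset Y))
        (f := fun i z => Real.sqrt (W (a i) z * W (b i) z))]
    have h2 : ∀ i : Fin 4, (∑ z : Y, Real.sqrt (W (a i) z * W (b i) z))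
        = if a i ≠ b i then Z else 1 := by
      intro i
      by_cases hab : a i = b i
      · simp only [hab, ne_eq, not_true_eq_false, if_false]
        calc ∑ z : Y, Real.sqrt (W (b i) z * W (b i) z)
              = ∑ z : Y, W (b i) z := by
                refine Finset.sum_congr rfl fun z _ => ?_
                rw [Real.sqrt_mul_self (hWnn _ _)]
          _ = 1 := hWsum _
      · rw [if_pos hab, hZ]
        match hA : a i, hB : b i with
        | false, true => rfl
        | true, false => exact Finset.sum_congr rfl fun z _ => by rw [mul_comm]
        | false, false => exact absurd rfl (hA ▸ hB ▸ hab)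
        | true, true => exact absurd rfl (hA ▸ hB ▸ hab)
    simp only [h2]
    rw [Finset.prod_ite, Finset.prod_const, Finset.prod_const, one_pow, mul_one]
    rfl
  -- pointwise lower bound
  have hPnn : ∀ (c : Fin 4 → Bool) (y : Fin 4 → Y), 0 ≤ ∏ i, W (c i) (y i) :=
    fun c y => Finset.prod_nonneg fun i _ => hWnn _ _
  have hle : ∀ y : Fin 4 → Y,
      ((1 : ℝ) / 2) * Real.sqrt ((∏ i, W (a i) (y i)) * ∏ i, W (b i) (y i))
        ≤ Real.sqrt ((((1 : ℝ) / 2) * ∑ u₄ : Bool, ∏ i, W (g u₁ x u₄ i) (y i)) *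
            (((1 : ℝ) / 2) * ∑ v₄ : Bool, ∏ i, W (g u₁ x' v₄ i) (y i))) := by
    intro y
    have hA : (∏ i, W (a i) (y i)) ≤ ∑ u₄ : Bool, ∏ i, W (g u₁ x u₄ i) (y i) :=
      Finset.single_le_sum (f := fun u₄ => ∏ i, W (g u₁ x u₄ i) (y i))
        (fun u _ => hPnn _ _) (Finset.mem_univ p.1)
    have hB : (∏ i, W (b i) (y i)) ≤ ∑ v₄ : Bool, ∏ i, W (g u₁ x' v₄ i) (y i) :=
      Finset.single_le_sum (f := fun v₄ => ∏ i, W (g u₁ x' v₄ i) (y i))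
        (fun u _ => hPnn _ _) (Finset.mem_univ p.2)
    have h0 : (0:ℝ) ≤ 1/2 := by norm_num
    calc ((1 : ℝ) / 2) * Real.sqrt ((∏ i, W (a i) (y i)) * ∏ i, W (b i) (y i))
        = Real.sqrt ((((1:ℝ)/2) * ∏ i, W (a i) (y i)) * (((1:ℝ)/2) * ∏ i, W (b i) (y i))) := by
          rw [show (((1:ℝ)/2) * ∏ i, W (a i) (y i)) * (((1:ℝ)/2) * ∏ i, W (b i) (y i))
              = ((1:ℝ)/4) * ((∏ i, W (a i) (y i)) * ∏ i, W (b i) (y i)) by ring,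
            Real.sqrt_mul (show (0:ℝ) ≤ 1/4 by norm_num)
              ((∏ i, W (a i) (y i)) * ∏ i, W (b i) (y i)),
            show Real.sqrt ((1:ℝ)/4) = 1/2 by
              rw [show (1:ℝ)/4 = (1/2)^2 by norm_num, Real.sqrt_sq h0]]
      _ ≤ _ := Real.sqrt_le_sqrt (by
          exact mul_le_mul (by linarith) (by linarith)
            (mul_nonneg h0 (hPnn _ _)) (mul_nonneg h0 (le_trans (hPnn _ _) hA)))
  calc ((1 : ℝ) / 2) * Z ^ hammingDist a b
      = ∑ y : Fin 4 → Y, ((1 : ℝ) / 2) *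
          Real.sqrt ((∏ i, W (a i) (y i)) * ∏ i, W (b i) (y i)) := by
        rw [← Finset.mul_sum, key]
    _ ≤ _ := Finset.sum_le_sum fun y _ => hle y
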